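/- Let L(x) be a nonzero linearized (2-linear) polynomial over 𝔽_{2^m}. Then x³ + L(x) is a bijection of 𝔽_{2^m} if and only if m is odd and L(x) = θ²x + θx² for some θ ∈ 𝔽_{2^m}*. -/

import Mathlib

set_option linter.unusedVariables false
set_option linter.unusedSectionVars false
set_option maxHeartbeats 1000000

open Finset Polynomial

namespace Stmt19Aux

lemma sum_range_two_pow (n : ℕ) : ∑ t ∈ range n, 2 ^ t = 2 ^ n - 1 := by
  induction n with
  | zero => simp
  | succ n ih =>
    rw [Finset.sum_range_succ, ih]
    have : 1 ≤ 2 ^ n := Nat.one_le_two_pow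
    ring_nf
    omega

lemma sum_Ico_two_pow {a b : ℕ} (h : a ≤ b) : ∑ t ∈ Ico a b, 2 ^ t = 2 ^ b - 2 ^ a := by
  have h1 : ∑ t ∈ range a, 2 ^ t + ∑ t ∈ Ico a b, 2 ^ t = ∑ t ∈ range b, 2 ^ t := by
    rw [Finset.range_eq_Ico, Finset.range_eq_Ico]
    exact Finset.sum_Ico_consecutive (fun t : ℕ => (2:ℕ) ^ t) (Nat.zero_le a) h
  have h2 := sum_range_two_pow a
  have h3 := sum_range_two_pow b
  have h4 : 1 ≤ 2 ^ a := Nat.one_le_two_pow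
  have h5 : (2:ℕ) ^ a ≤ 2 ^ b := Nat.pow_le_pow_right (by norm_num) h
  omega

lemma sum_subset_le {m : ℕ} {S : Finset ℕ} (hS : S ⊆ range m) :
    ∑ t ∈ S, 2 ^ t ≤ 2 ^ m - 1 := by
  calc ∑ t ∈ S, 2 ^ t ≤ ∑ t ∈ range m, 2 ^ t :=
        Finset.sum_le_sum_of_subset hS
    _ = 2 ^ m - 1 := sum_range_two_pow m

lemma sum_subset_lt {m : ℕ} {S : Finset ℕ} (hS : S ⊆ range m) (hne : S ≠ range m) :
    ∑ t ∈ S, 2 ^ t < 2 ^ m - 1 := by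
  obtain ⟨x, hxr, hxS⟩ : ∃ x, x ∈ range m ∧ x ∉ S := by
    by_contra h
    push_neg at h
    exact hne (Finset.Subset.antisymm hS (fun x hx => h x hx))
  have hsub : S ⊆ (range m).erase x := fun y hy =>
    Finset.mem_erase.mpr ⟨fun h => hxS (h ▸ hy), hS hy⟩
  have h1 : ∑ t ∈ S, 2 ^ t ≤ ∑ t ∈ (range m).erase x, 2 ^ t :=
    Finset.sum_le_sum_of_subset hsub
  have h2 : 2 ^ x + ∑ t ∈ (range m).erase x, 2 ^ t = ∑ t ∈ range m, 2 ^ t :=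
    Finset.add_sum_erase _ _ hxr
  have h3 := sum_range_two_pow m
  have h4 : 1 ≤ 2 ^ x := Nat.one_le_two_pow
  omega

lemma two_pow_sum_inj : ∀ (M : ℕ) (S S' : Finset ℕ), S ⊆ range M → S' ⊆ range M →
    ∑ t ∈ S, 2 ^ t = ∑ t ∈ S', 2 ^ t → S = S' := by
  intro M
  induction M with
  | zero =>
    intro S S' hS hS' _
    simp only [Finset.range_zero, Finset.subset_empty] at hS hS'
    rw [hS, hS']
  | succ M ih =>
    intro S S' hS hS' hsum
    have key : ∀ T : Finset ℕ, T ⊆ range (M+1) → M ∉ T → ∑ t ∈ T, 2 ^ t < 2 ^ M := by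
      intro T hT hMT
      have hT' : T ⊆ range M := by
        intro y hy
        have := hT hy
        rw [Finset.mem_range] at this ⊢
        rcases Nat.lt_succ_iff_lt_or_eq.mp this with h | rfl
        · exact h
        · exact absurd hy hMT
      have := sum_subset_le hT'
      have : 1 ≤ 2 ^ M := Nat.one_le_two_pow
      omega
    by_cases hM : M ∈ S <;> by_cases hM' : M ∈ S'
    · have e1 : S = insert M (S.erase M) := (Finset.insert_erase hM).symm
      have e2 : S' = insert M (S'.erase M) := (Finset.insert_erase hM').symm
      have hs1 : 2 ^ M + ∑ t ∈ S.erase M, 2 ^ t = ∑ t ∈ S, 2 ^ t :=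
        Finset.add_sum_erase _ _ hM
      have hs2 : 2 ^ M + ∑ t ∈ S'.erase M, 2 ^ t = ∑ t ∈ S', 2 ^ t :=
        Finset.add_sum_erase _ _ hM'
      have := ih (S.erase M) (S'.erase M)
        (fun y hy => by
          have h1 := Finset.mem_erase.mp hy
          have h2 := Finset.mem_range.mp (hS h1.2)
          exact Finset.mem_range.mpr (by omega))
        (fun y hy => by
          have h1 := Finset.mem_erase.mp hy
          have h2 := Finset.mem_range.mp (hS' h1.2)
          exact Finset.mem_range.mpr (by omega))
        (by omega)
      rw [e1, e2, this]
    · exfalso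
      have h1 : 2 ^ M ≤ ∑ t ∈ S, 2 ^ t := Finset.single_le_sum (fun i _ => Nat.zero_le _) hM
      have h2 := key S' hS' hM'
      omega
    · exfalso
      have h1 : 2 ^ M ≤ ∑ t ∈ S', 2 ^ t := Finset.single_le_sum (fun i _ => Nat.zero_le _) hM'
      have h2 := key S hS hM
      omega
    · exact ih S S'
        (fun y hy => by
          have h2 := Finset.mem_range.mp (hS hy)
          exact Finset.mem_range.mpr (lt_of_le_of_ne (Nat.lt_succ_iff.mp h2) (fun he => hM (he ▸ hy))))
        (fun y hy => by
          have h2 := Finset.mem_range.mp (hS' hy)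
          exact Finset.mem_range.mpr (lt_of_le_of_ne (Nat.lt_succ_iff.mp h2) (fun he => hM' (he ▸ hy))))
        hsum



variable {m : ℕ}

lemma add_mod_congr (t j j' : ℕ) (h : j % m = j' % m) : (t + j) % m = (t + j') % m :=
  Nat.ModEq.add_left t h

def rot (m j : ℕ) (S : Finset ℕ) : Finset ℕ := S.image fun t => (t + j) % m

def B (m i : ℕ) : Finset ℕ :=
  if i = 0 then (range m).erase 1 else if i = 1 then (range m).erase 0
  else insert 0 (Ico 2 i)

lemma rot_subset_range (hm : 0 < m) (j : ℕ) (S : Finset ℕ) : rot m j S ⊆ range m := by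
  intro x hx
  obtain ⟨t, _, rfl⟩ := Finset.mem_image.mp hx
  exact Finset.mem_range.mpr (Nat.mod_lt _ hm)

lemma rot_card {S : Finset ℕ} (hS : S ⊆ range m) (j : ℕ) : (rot m j S).card = S.card := by
  apply Finset.card_image_of_injOn
  intro t ht t' ht' h
  have ht1 : t < m := Finset.mem_range.mp (hS ht)
  have ht2 : t' < m := Finset.mem_range.mp (hS ht')
  have h2 : t % m = t' % m := Nat.ModEq.add_right_cancel' j h
  rwa [Nat.mod_eq_of_lt ht1, Nat.mod_eq_of_lt ht2] at h2

lemma rot_rot (j k : ℕ) (S : Finset ℕ) : rot m j (rot m k S) = rot m (j + k) S := by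
  unfold rot
  rw [Finset.image_image]
  apply Finset.image_congr
  intro t _
  simp only [Function.comp_apply]
  rw [Nat.mod_add_mod, Nat.add_assoc, Nat.add_comm k j]

lemma rot_mod (j : ℕ) (S : Finset ℕ) : rot m (j % m) S = rot m j S := by
  unfold rot
  apply Finset.image_congr
  intro t _
  simp only
  exact add_mod_congr t _ _ (Nat.mod_mod_of_dvd _ dvd_rfl)

lemma rot_zero {S : Finset ℕ} (hS : S ⊆ range m) : rot m 0 S = S := by
  unfold rot
  rw [← Finset.image_id (s := S)]
  rw [Finset.image_image]
  apply Finset.image_congr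
  intro t ht
  simp only [Function.comp_apply, id, Nat.add_zero]
  exact Nat.mod_eq_of_lt (Finset.mem_range.mp (hS (by simpa using ht)))

lemma rot_inv_mod (hm : 0 < m) (j : ℕ) : (m - j % m + j) % m = 0 := by
  have h1 : j % m < m := Nat.mod_lt _ hm
  rw [add_mod_congr _ j (j % m) (Nat.mod_mod_of_dvd _ dvd_rfl).symm]
  rw [Nat.sub_add_cancel (le_of_lt h1), Nat.mod_self]

lemma rot_inj (hm : 0 < m) {S S' : Finset ℕ} (hS : S ⊆ range m) (hS' : S' ⊆ range m)
    (j : ℕ) (h : rot m j S = rot m j S') : S = S' := by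
  have key : rot m (m - j % m) (rot m j S) = rot m (m - j % m) (rot m j S') := by rw [h]
  rw [rot_rot, rot_rot, ← rot_mod _ S, ← rot_mod _ S', rot_inv_mod hm,
    rot_zero hS, rot_zero hS'] at key
  exact key

lemma rot_range (hm : 0 < m) (j : ℕ) : rot m j (range m) = range m := by
  apply Finset.eq_of_subset_of_card_le (rot_subset_range hm j _)
  rw [rot_card (le_refl _)]

lemma rot_erase (hm : 0 < m) (j x : ℕ) (hx : x < m) :
    rot m j ((range m).erase x) = (range m).erase ((x + j) % m) := by
  have hsub : rot m j ((range m).erase x) ⊆ (range m).erase ((x + j) % m) := by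
    intro y hy
    obtain ⟨t, ht, rfl⟩ := Finset.mem_image.mp hy
    obtain ⟨htx, htm⟩ := Finset.mem_erase.mp ht
    have htm' : t < m := Finset.mem_range.mp htm
    refine Finset.mem_erase.mpr ⟨fun h => htx ?_, Finset.mem_range.mpr (Nat.mod_lt _ hm)⟩
    have h2 : t % m = x % m := Nat.ModEq.add_right_cancel' j h
    rwa [Nat.mod_eq_of_lt htm', Nat.mod_eq_of_lt hx] at h2
  apply Finset.eq_of_subset_of_card_le hsub
  rw [rot_card (Finset.erase_subset _ _),
    Finset.card_erase_of_mem (Finset.mem_range.mpr hx),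
    Finset.card_erase_of_mem (Finset.mem_range.mpr (Nat.mod_lt _ hm))]

lemma B_subset_range (hm2 : 2 ≤ m) {i : ℕ} (hi : i < m) : B m i ⊆ range m := by
  unfold B
  split_ifs with h0 h1
  · exact Finset.erase_subset _ _
  · exact Finset.erase_subset _ _
  · intro x hx
    rcases Finset.mem_insert.mp hx with rfl | hx
    · exact Finset.mem_range.mpr (by omega)
    · have := Finset.mem_Ico.mp hx
      exact Finset.mem_range.mpr (by omega)

lemma B_card_0 (hm2 : 2 ≤ m) : (B m 0).card = m - 1 := by
  unfold B
  rw [if_pos rfl, Finset.card_erase_of_mem (Finset.mem_range.mpr (by omega)),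
    Finset.card_range]

lemma B_card_1 (hm2 : 2 ≤ m) : (B m 1).card = m - 1 := by
  unfold B
  rw [if_neg (by omega), if_pos rfl,
    Finset.card_erase_of_mem (Finset.mem_range.mpr (by omega)), Finset.card_range]

lemma B_card_ge2 {i : ℕ} (hi : 2 ≤ i) : (B m i).card = i - 1 := by
  unfold B
  rw [if_neg (by omega), if_neg (by omega),
    Finset.card_insert_of_notMem (by simp), Nat.card_Ico]
  omega

lemma B_sum_0 (hm2 : 2 ≤ m) : ∑ t ∈ B m 0, 2 ^ t = 2 ^ m - 3 := by
  unfold B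
  rw [if_pos rfl]
  have h : 2 ^ (1:ℕ) + ∑ x ∈ (range m).erase 1, 2 ^ x = ∑ x ∈ range m, 2 ^ x :=
    Finset.add_sum_erase (range m) (fun t : ℕ => (2:ℕ) ^ t)
      (Finset.mem_range.mpr (show 1 < m by omega))
  have h2 := sum_range_two_pow m
  have h3 : (4:ℕ) ≤ 2 ^ m := by
    calc (4:ℕ) = 2 ^ 2 := rfl
      _ ≤ 2 ^ m := Nat.pow_le_pow_right (by norm_num) hm2
  omega

lemma B_sum_1 (hm2 : 2 ≤ m) : ∑ t ∈ B m 1, 2 ^ t = 2 ^ m - 2 := by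
  unfold B
  rw [if_neg (by omega), if_pos rfl]
  have h : 2 ^ (0:ℕ) + ∑ x ∈ (range m).erase 0, 2 ^ x = ∑ x ∈ range m, 2 ^ x :=
    Finset.add_sum_erase (range m) (fun t : ℕ => (2:ℕ) ^ t)
      (Finset.mem_range.mpr (show 0 < m by omega))
  have h2 := sum_range_two_pow m
  have h3 : (4:ℕ) ≤ 2 ^ m := by
    calc (4:ℕ) = 2 ^ 2 := rfl
      _ ≤ 2 ^ m := Nat.pow_le_pow_right (by norm_num) hm2
  omega

lemma B_sum_ge2 {i : ℕ} (hi : 2 ≤ i) : ∑ t ∈ B m i, 2 ^ t = 2 ^ i - 3 := by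
  unfold B
  rw [if_neg (by omega), if_neg (by omega), Finset.sum_insert (by simp),
    sum_Ico_two_pow hi]
  have h3 : (4:ℕ) ≤ 2 ^ i := by
    calc (4:ℕ) = 2 ^ 2 := rfl
      _ ≤ 2 ^ i := Nat.pow_le_pow_right (by norm_num) hi
  simp
  omega

lemma zero_mem_B_ge2 {i : ℕ} (hi : 2 ≤ i) : 0 ∈ B m i := by
  unfold B
  rw [if_neg (by omega), if_neg (by omega)]
  exact Finset.mem_insert_self _ _

lemma one_not_mem_B_ge2 {i : ℕ} (hi : 2 ≤ i) : 1 ∉ B m i := by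
  unfold B
  rw [if_neg (by omega), if_neg (by omega)]
  simp

lemma mem_B_ge2 {i x : ℕ} (hi : 2 ≤ i) : x ∈ B m i ↔ x = 0 ∨ (2 ≤ x ∧ x < i) := by
  unfold B
  rw [if_neg (by omega), if_neg (by omega)]
  simp [Finset.mem_Ico]


lemma exists_mul_mod_gcd (k m : ℕ) (hm : 0 < m) :
    ∃ u : ℕ, (k * u) % m = (Nat.gcd k m) % m := by
  set a := Nat.gcdA k m with ha
  set b := Nat.gcdB k m with hb
  have hbez : (Nat.gcd k m : ℤ) = k * a + m * b := Nat.gcd_eq_gcd_ab k m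
  have hm' : (m : ℤ) ≠ 0 := by exact_mod_cast hm.ne'
  refine ⟨(a % m).toNat, ?_⟩
  have h0 : (0:ℤ) ≤ a % m := Int.emod_nonneg a hm'
  have hu : ((a % m).toNat : ℤ) = a % m := Int.toNat_of_nonneg h0
  have h1 : (a % (m:ℤ)) ≡ a [ZMOD (m:ℤ)] := Int.emod_emod_of_dvd a dvd_rfl
  have h2 : (k:ℤ) * (a % m) ≡ (k:ℤ) * a [ZMOD (m:ℤ)] := h1.mul_left _
  have h3 : ((Nat.gcd k m : ℤ)) % m = ((k:ℤ) * a) % m := by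
    rw [hbez, Int.add_mul_emod_self_left]
  have key : ((k : ℤ) * ((a % m).toNat : ℤ)) % m = (Nat.gcd k m : ℤ) % m := by
    rw [hu]; exact h2.trans (Int.ModEq.symm h3)
  exact_mod_cast key

lemma rigidity (hm3 : 3 ≤ m) (hodd : Odd m) {i : ℕ} (hi2 : 2 ≤ i) (him : i < m)
    {k : ℕ} (hk : k < m) (hk0 : k ≠ 0) (hEq : rot m k (B m i) = B m i) : False := by
  have hm0 : 0 < m := by omega
  set S := B m i with hS
  have hSr : S ⊆ range m := B_subset_range (by omega) him
  have hrotmul : ∀ n, rot m (k * n) S = S := by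
    intro n
    induction n with
    | zero => rw [Nat.mul_zero]; exact rot_zero hSr
    | succ n ih =>
      have e : k * (n + 1) = k * n + k := by ring
      rw [e, ← rot_rot, hEq, ih]
  set g := Nat.gcd k m with hg
  have hgk : g ∣ k := Nat.gcd_dvd_left _ _
  have hgm : g ∣ m := Nat.gcd_dvd_right _ _
  have hg0 : 0 < g := Nat.gcd_pos_of_pos_left _ (by omega)
  have hglt : g < m := lt_of_le_of_lt (Nat.le_of_dvd (by omega) hgk) hk
  obtain ⟨u, hu⟩ := exists_mul_mod_gcd k m hm0
  have hrotg : rot m g S = S := by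
    have : rot m ((k * u) % m) S = S := by rw [rot_mod]; exact hrotmul u
    rwa [hu, Nat.mod_eq_of_lt hglt] at this
  have hmemg : ∀ x, x < m → (x ∈ S ↔ (x + g) % m ∈ S) := by
    intro x hx
    constructor
    · intro hxS
      rw [← hrotg]
      exact Finset.mem_image_of_mem _ hxS
    · intro hxS
      rw [← hrotg] at hxS
      obtain ⟨t, ht, htx⟩ := Finset.mem_image.mp hxS
      have htm : t < m := Finset.mem_range.mp (hSr ht)
      have heq : t % m = x % m := Nat.ModEq.add_right_cancel' g htx
      rw [Nat.mod_eq_of_lt htm, Nat.mod_eq_of_lt hx] at heq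
      rwa [heq] at ht

  have h0S : (0:ℕ) ∈ S := zero_mem_B_ge2 hi2
  have h1S : (1:ℕ) ∉ S := one_not_mem_B_ge2 hi2
  by_cases hg1 : g = 1
  · apply h1S
    have := (hmemg 0 hm0).mp h0S
    rwa [hg1, Nat.zero_add, Nat.mod_eq_of_lt (by omega)] at this
  · -- g ≥ 2
    have hg2 : 2 ≤ g := by omega
    have hgS : g ∈ S := by
      have := (hmemg 0 hm0).mp h0S
      rwa [Nat.zero_add, Nat.mod_eq_of_lt hglt] at this
    have hgi : g < i := by
      rcases (mem_B_ge2 hi2).mp hgS with h | h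
      · omega
      · exact h.2
    have h1g : (1 + g) % m ∉ S := fun h => h1S ((hmemg 1 (by omega)).mpr h)
    have h1g' : 1 + g < m := by omega
    rw [Nat.mod_eq_of_lt h1g'] at h1g
    have hgei : 1 + g ≥ i := by
      by_contra hlt
      exact h1g ((mem_B_ge2 hi2).mpr (Or.inr ⟨by omega, by omega⟩))
    have hgeq : g = i - 1 := by omega
    have hi3 : 3 ≤ i := by omega
    have h2S : (2:ℕ) ∈ S := (mem_B_ge2 hi2).mpr (Or.inr ⟨le_refl _, by omega⟩)
    have h2g : (2 + g) % m ∈ S := (hmemg 2 (by omega)).mp h2S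
    have h2g' : 2 + g = i + 1 := by omega
    by_cases hip : i + 1 < m
    · rw [h2g', Nat.mod_eq_of_lt hip] at h2g
      rcases (mem_B_ge2 hi2).mp h2g with h | h <;> omega
    · -- i + 1 = m
      have him' : i + 1 = m := by omega
      have hd : m - 2 ∣ m := by rw [show m - 2 = g by omega]; exact hgm
      have hd2 : m - 2 ∣ m - (m - 2) := Nat.dvd_sub hd dvd_rfl
      rw [show m - (m - 2) = 2 by omega] at hd2
      have := Nat.le_of_dvd (by norm_num) hd2
      obtain ⟨w, hw⟩ := hodd
      omega



lemma B_zero_eq : B m 0 = (range m).erase 1 := by unfold B; rw [if_pos rfl]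

lemma B_one_eq : B m 1 = (range m).erase 0 := by
  unfold B; rw [if_neg (by omega), if_pos rfl]

lemma erase_range_inj (hm : 0 < m) {x y : ℕ} (hx : x < m) (hy : y < m)
    (h : (range m).erase x = (range m).erase y) : x = y := by
  by_contra hne
  have : y ∈ (range m).erase x := Finset.mem_erase.mpr ⟨fun hc => hne hc.symm,
    Finset.mem_range.mpr hy⟩
  rw [h] at this
  exact (Finset.mem_erase.mp this).1 rfl

lemma add_one_mod_inj (hm : 0 < m) {x j j' : ℕ} (hj : j < m) (hj' : j' < m)
    (h : (x + j) % m = (x + j') % m) : j = j' := by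
  have h2 : j % m = j' % m := Nat.ModEq.add_left_cancel' x h
  rwa [Nat.mod_eq_of_lt hj, Nat.mod_eq_of_lt hj'] at h2

lemma rot_B_zero (hm2 : 2 ≤ m) (j : ℕ) :
    rot m j (B m 0) = (range m).erase ((1 + j) % m) := by
  rw [B_zero_eq, rot_erase (by omega) j 1 (by omega)]

lemma rot_B_one (hm2 : 2 ≤ m) (j : ℕ) :
    rot m j (B m 1) = (range m).erase (j % m) := by
  rw [B_one_eq, rot_erase (by omega) j 0 (by omega)]
  rw [Nat.zero_add]

lemma pair_eq (hm2 : 2 ≤ m) (j : ℕ) :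
    rot m ((j + 1) % m) (B m 1) = rot m j (B m 0) := by
  rw [rot_B_one hm2, rot_B_zero hm2, Nat.mod_mod_of_dvd _ dvd_rfl, Nat.add_comm j 1]

lemma classify (hm3 : 3 ≤ m) (hodd : Odd m) {i j i' j' : ℕ} (hi : i < m) (hj : j < m)
    (hi' : i' < m) (hj' : j' < m) (h : rot m j (B m i) = rot m j' (B m i')) :
    (i = i' ∧ j = j') ∨ (i = 0 ∧ i' = 1 ∧ j' = (j + 1) % m) ∨
      (i = 1 ∧ i' = 0 ∧ j = (j' + 1) % m) := by
  have hm2 : 2 ≤ m := by omega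
  have hm0 : 0 < m := by omega
  have hcard : (B m i).card = (B m i').card := by
    rw [← rot_card (B_subset_range hm2 hi) j, h, rot_card (B_subset_range hm2 hi') j']
  by_cases h2i : 2 ≤ i <;> by_cases h2i' : 2 ≤ i'
  · -- both ≥ 2
    rw [B_card_ge2 h2i, B_card_ge2 h2i'] at hcard
    have hii' : i = i' := by omega
    subst hii'
    left
    refine ⟨rfl, ?_⟩
    by_contra hjj'
    have key : rot m ((m - j' + j) % m) (B m i) = B m i := by
      have step : rot m (m - j') (rot m j (B m i)) = rot m (m - j') (rot m j' (B m i)) := by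
        rw [h]
      rw [rot_rot, rot_rot] at step
      have e2 : m - j' + j' = m := by omega
      rw [e2] at step
      have e3 : rot m m (B m i) = B m i := by
        rw [← rot_mod, Nat.mod_self, rot_zero (B_subset_range hm2 hi)]
      rw [e3, ← rot_mod] at step
      exact step
    have hk : (m - j' + j) % m < m := Nat.mod_lt _ hm0
    have hk0 : (m - j' + j) % m ≠ 0 := by
      intro hc
      have : m - j' + j < 2 * m := by omega
      have h1 : m - j' + j = 0 ∨ m - j' + j = m := by
        rcases Nat.lt_or_ge (m - j' + j) m with hlt | hge
        · left; rwa [Nat.mod_eq_of_lt hlt] at hc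
        · right
          have : (m - j' + j) - m < m := by omega
          have e : m - j' + j = (m - j' + j - m) + m := by omega
          rw [e, Nat.add_mod_right, Nat.mod_eq_of_lt this] at hc
          omega
      omega
    exact absurd key (fun hEq => rigidity hm3 hodd h2i hi hk hk0 hEq)
  · -- i ≥ 2, i' ≤ 1
    exfalso
    have hc1 : (B m i).card = i - 1 := B_card_ge2 h2i
    have hc2 : (B m i').card = m - 1 := by
      interval_cases i'
      · exact B_card_0 hm2
      · exact B_card_1 hm2
    omega
  · -- i ≤ 1, i' ≥ 2
    exfalso
    have hc1 : (B m i').card = i' - 1 := B_card_ge2 h2i'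
    have hc2 : (B m i).card = m - 1 := by
      interval_cases i
      · exact B_card_0 hm2
      · exact B_card_1 hm2
    omega
  · -- both ≤ 1
    interval_cases i <;> interval_cases i'
    · rw [rot_B_zero hm2, rot_B_zero hm2] at h
      have := erase_range_inj hm0 (Nat.mod_lt _ hm0) (Nat.mod_lt _ hm0) h
      exact Or.inl ⟨rfl, add_one_mod_inj hm0 hj hj' this⟩
    · rw [rot_B_zero hm2, rot_B_one hm2] at h
      have := erase_range_inj hm0 (Nat.mod_lt _ hm0) (Nat.mod_lt _ hm0) h
      rw [Nat.mod_eq_of_lt hj'] at this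
      exact Or.inr (Or.inl ⟨rfl, rfl, by rw [← this, Nat.add_comm 1 j]⟩)
    · rw [rot_B_one hm2, rot_B_zero hm2] at h
      have := erase_range_inj hm0 (Nat.mod_lt _ hm0) (Nat.mod_lt _ hm0) h
      rw [Nat.mod_eq_of_lt hj] at this
      exact Or.inr (Or.inr ⟨rfl, rfl, by rw [this, Nat.add_comm 1 j']⟩)
    · rw [rot_B_one hm2, rot_B_one hm2] at h
      have := erase_range_inj hm0 (Nat.mod_lt _ hm0) (Nat.mod_lt _ hm0) h
      rw [Nat.mod_eq_of_lt hj, Nat.mod_eq_of_lt hj'] at this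
      exact Or.inl ⟨rfl, this⟩



def E (m i j : ℕ) : ℕ := (2 ^ (i + j) + (2 ^ m - 2) * (3 * 2 ^ j)) % (2 ^ m - 1)

lemma pow2_mod (hm : 0 < m) (k : ℕ) : 2 ^ (k % m) % (2 ^ m - 1) = 2 ^ k % (2 ^ m - 1) := by
  set N := 2 ^ m - 1 with hN
  conv_rhs => rw [← Nat.div_add_mod k m]
  rw [pow_add, pow_mul]
  have h1 : (2 ^ m) % N = 1 % N := by
    have e : (2:ℕ) ^ m = N + 1 := by
      have : 1 ≤ 2 ^ m := Nat.one_le_two_pow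
      omega
    rw [e, Nat.add_mod_left]
  have h2 : (2 ^ m) ^ (k / m) % N = 1 % N := by
    have := Nat.ModEq.pow (k / m) (h1 : (2:ℕ) ^ m ≡ 1 [MOD N])
    rw [one_pow] at this
    exact this
  calc 2 ^ (k % m) % N = 1 * 2 ^ (k % m) % N := by rw [Nat.one_mul]
    _ = (2 ^ m) ^ (k / m) * 2 ^ (k % m) % N :=
        (Nat.ModEq.mul_right _ (h2 : ((2:ℕ) ^ m) ^ (k / m) ≡ 1 [MOD N])).symm

lemma B_card_lt (hm2 : 2 ≤ m) {i : ℕ} (hi : i < m) : (B m i).card < m := by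
  by_cases h2 : 2 ≤ i
  · rw [B_card_ge2 h2]; omega
  · interval_cases i
    · rw [B_card_0 hm2]; omega
    · rw [B_card_1 hm2]; omega

lemma rot_B_ne_range (hm2 : 2 ≤ m) {i : ℕ} (hi : i < m) (j : ℕ) :
    rot m j (B m i) ≠ range m := by
  intro hc
  have h1 : (rot m j (B m i)).card = (B m i).card := rot_card (B_subset_range hm2 hi) j
  have h2 := B_card_lt hm2 hi
  rw [hc, Finset.card_range] at h1
  omega

lemma E_eq_sum (hm2 : 2 ≤ m) {i j : ℕ} (hi : i < m) (hj : j < m) :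
    E m i j = ∑ t ∈ rot m j (B m i), 2 ^ t := by
  have hm0 : 0 < m := by omega
  set N := 2 ^ m - 1 with hN
  have hNpos : 0 < N := by
    have : (4:ℕ) ≤ 2 ^ m := by
      calc (4:ℕ) = 2 ^ 2 := rfl
        _ ≤ 2 ^ m := Nat.pow_le_pow_right (by norm_num) hm2
    omega
  -- sum over image
  have hinj : ∀ x ∈ B m i, ∀ y ∈ B m i, (x + j) % m = (y + j) % m → x = y := by
    intro x hx y hy hxy
    have hx' : x < m := Finset.mem_range.mp (B_subset_range hm2 hi hx)
    have hy' : y < m := Finset.mem_range.mp (B_subset_range hm2 hi hy)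
    have h2 : x % m = y % m := Nat.ModEq.add_right_cancel' j hxy
    rwa [Nat.mod_eq_of_lt hx', Nat.mod_eq_of_lt hy'] at h2
  have hsum_im : ∑ t ∈ rot m j (B m i), 2 ^ t = ∑ t ∈ B m i, 2 ^ ((t + j) % m) :=
    Finset.sum_image hinj
  -- the sum is < N
  have hlt : ∑ t ∈ rot m j (B m i), 2 ^ t < N :=
    sum_subset_lt (rot_subset_range hm0 j _) (rot_B_ne_range hm2 hi j)
  -- congruence chain
  have hmod1 : (∑ t ∈ B m i, 2 ^ ((t + j) % m)) % N = (∑ t ∈ B m i, 2 ^ (t + j)) % N := by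
    rw [Finset.sum_nat_mod]
    conv_rhs => rw [Finset.sum_nat_mod]
    congr 1
    apply Finset.sum_congr rfl
    intro t _
    exact pow2_mod hm0 (t + j)
  have hfactor : ∑ t ∈ B m i, 2 ^ (t + j) = 2 ^ j * ∑ t ∈ B m i, 2 ^ t := by
    rw [Finset.mul_sum]
    apply Finset.sum_congr rfl
    intro t _
    rw [pow_add, Nat.mul_comm]
  -- key congruence : D ≡ 2^j * r  [MOD N]
  have hD : (2 ^ (i + j) + (2 ^ m - 2) * (3 * 2 ^ j)) % N
      = (2 ^ j * ∑ t ∈ B m i, 2 ^ t) % N := by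
    have hexp : 2 ^ (i + j) + (2 ^ m - 2) * (3 * 2 ^ j)
        = 2 ^ j * (2 ^ i + 3 * (2 ^ m - 2)) := by
      rw [pow_add]
      ring
    rw [hexp]
    -- now reduce 2^i + 3*(2^m - 2) mod N to r = ∑ 2^t over B
    have hcase : ∃ c : ℕ, 2 ^ i + 3 * (2 ^ m - 2) = (∑ t ∈ B m i, 2 ^ t) + N * c := by
      have hPm : (4:ℕ) ≤ 2 ^ m := by
        calc (4:ℕ) = 2 ^ 2 := rfl
          _ ≤ 2 ^ m := Nat.pow_le_pow_right (by norm_num) hm2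
      by_cases h2 : 2 ≤ i
      · refine ⟨3, ?_⟩
        rw [B_sum_ge2 h2]
        have h4i : (4:ℕ) ≤ 2 ^ i := by
          calc (4:ℕ) = 2 ^ 2 := rfl
            _ ≤ 2 ^ i := Nat.pow_le_pow_right (by norm_num) h2
        omega
      · interval_cases i
        · refine ⟨2, ?_⟩
          rw [B_sum_0 hm2]
          simp only [pow_zero]
          omega
        · refine ⟨2, ?_⟩
          rw [B_sum_1 hm2]
          simp only [pow_one]
          omega
    obtain ⟨c, hc⟩ := hcase
    rw [hc, Nat.mul_add, ← Nat.mul_assoc, Nat.mul_comm (2 ^ j) N, Nat.mul_assoc,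
      Nat.add_mul_mod_self_left]
  unfold E
  rw [← hN, hD, ← hfactor, ← hmod1, ← hsum_im, Nat.mod_eq_of_lt hlt]



variable {F : Type*} [Field F] [Fintype F] {m : ℕ}

lemma two_zero (hm : 0 < m) (hcard : Fintype.card F = 2 ^ m) : (2 : F) = 0 := by
  have h := FiniteField.cast_card_eq_zero F
  rw [hcard] at h
  push_cast at h
  exact pow_eq_zero_iff hm.ne' |>.mp h

lemma self_add_self (h2 : (2:F) = 0) (x : F) : x + x = 0 := by
  rw [← two_mul, h2, zero_mul]

lemma frob_add (h2 : (2:F) = 0) (x y : F) : (x + y) ^ 2 = x ^ 2 + y ^ 2 := by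
  rw [add_sq, h2]
  ring

lemma frob_pow_add (h2 : (2:F) = 0) (j : ℕ) (x y : F) :
    (x + y) ^ 2 ^ j = x ^ 2 ^ j + y ^ 2 ^ j := by
  induction j with
  | zero => simp
  | succ j ih =>
    rw [pow_succ, pow_mul, pow_mul, pow_mul, ih, frob_add h2]

lemma frob_pow_sum (h2 : (2:F) = 0) (j : ℕ) {ι : Type*} (s : Finset ι) (f : ι → F) :
    (∑ i ∈ s, f i) ^ 2 ^ j = ∑ i ∈ s, f i ^ 2 ^ j := by
  classical
  induction s using Finset.induction_on with
  | empty => simp [zero_pow (Nat.two_pow_pos j).ne']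
  | insert _ _ hnotmem ih =>
    rw [Finset.sum_insert hnotmem, Finset.sum_insert hnotmem, frob_pow_add h2, ih]

/-- trace-like function -/
def Tr (m : ℕ) (x : F) : F := ∑ j ∈ range m, x ^ 2 ^ j

lemma Tr_add (h2 : (2:F) = 0) (x y : F) : Tr m (x + y) = Tr m x + Tr m y := by
  unfold Tr
  rw [← Finset.sum_add_distrib]
  exact Finset.sum_congr rfl fun j _ => frob_pow_add h2 j x y

lemma Tr_zero : Tr m (0 : F) = 0 := by
  unfold Tr
  apply Finset.sum_eq_zero
  intro j _
  exact zero_pow (pow_ne_zero _ (by norm_num))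

lemma Tr_sum (h2 : (2:F) = 0) {ι : Type*} (s : Finset ι) (f : ι → F) :
    Tr m (∑ i ∈ s, f i) = ∑ i ∈ s, Tr m (f i) := by
  classical
  induction s using Finset.induction_on with
  | empty => simp [Tr_zero]
  | insert _ _ hnotmem ih =>
    rw [Finset.sum_insert hnotmem, Finset.sum_insert hnotmem, Tr_add h2, ih]

lemma pow_card_self (hcard : Fintype.card F = 2 ^ m) (x : F) : x ^ 2 ^ m = x := by
  rw [← hcard]; exact FiniteField.pow_card x

lemma Tr_frob (hm : 0 < m) (hcard : Fintype.card F = 2 ^ m) (x : F) :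
    Tr m (x ^ 2) = Tr m x := by
  unfold Tr
  have e1 : ∀ j : ℕ, (x ^ 2) ^ 2 ^ j = x ^ 2 ^ (j + 1) := by
    intro j
    rw [← pow_mul, ← pow_succ']
  calc ∑ j ∈ range m, (x ^ 2) ^ 2 ^ j = ∑ j ∈ range m, x ^ 2 ^ (j + 1) :=
        Finset.sum_congr rfl fun j _ => e1 j
    _ = (∑ j ∈ range (m + 1), x ^ 2 ^ j) - x ^ 2 ^ 0 := by
        rw [Finset.sum_range_succ' (fun j => x ^ 2 ^ j) m]
        ring
    _ = (∑ j ∈ range m, x ^ 2 ^ j) + x ^ 2 ^ m - x ^ 2 ^ 0 := by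
        rw [Finset.sum_range_succ]
    _ = ∑ j ∈ range m, x ^ 2 ^ j := by
        rw [pow_card_self hcard, pow_zero, pow_one]
        ring

lemma Tr_idem (h2 : (2:F) = 0) (hm : 0 < m) (hcard : Fintype.card F = 2 ^ m) (x : F) :
    (Tr m x) ^ 2 = Tr m x := by
  have e : (Tr m x) ^ 2 = Tr m (x ^ 2) := by
    unfold Tr
    have h := frob_pow_sum h2 1 (range m) (fun j => x ^ 2 ^ j)
    norm_num at h
    rw [h]
    apply Finset.sum_congr rfl
    intro j _
    rw [← pow_mul, ← pow_mul, Nat.mul_comm]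
  rw [e, Tr_frob hm hcard]

lemma Tr_zero_or_one (h2 : (2:F) = 0) (hm : 0 < m) (hcard : Fintype.card F = 2 ^ m) (x : F) :
    Tr m x = 0 ∨ Tr m x = 1 := by
  have h := Tr_idem h2 hm hcard x
  have : Tr m x * (Tr m x - 1) = 0 := by
    rw [mul_sub, mul_one, ← sq, h, sub_self]
  rcases mul_eq_zero.mp this with h | h
  · exact Or.inl h
  · exact Or.inr (by linear_combination h)

lemma Tr_AS (h2 : (2:F) = 0) (hm : 0 < m) (hcard : Fintype.card F = 2 ^ m) (s : F) :
    Tr m (s ^ 2 + s) = 0 := by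
  rw [Tr_add h2, Tr_frob hm hcard]
  exact self_add_self h2 _

lemma Tr_one : Tr m (1 : F) = (m : F) := by
  unfold Tr
  simp

/-- solvability of Artin-Schreier equations -/
lemma AS_of_Tr_zero (h2 : (2:F) = 0) (hm : 0 < m) (hcard : Fintype.card F = 2 ^ m)
    {c : F} (hc : Tr m c = 0) : ∃ s : F, s ^ 2 + s = c := by
  classical
  set ψ : F → F := fun s => s ^ 2 + s with hψ
  set img : Finset F := Finset.image ψ Finset.univ with himg
  set fset : Finset F := Finset.univ.filter (fun x => Tr m x = 0) with hfset
  have hsub : img ⊆ fset := by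
    intro y hy
    obtain ⟨s, _, rfl⟩ := Finset.mem_image.mp hy
    exact Finset.mem_filter.mpr ⟨Finset.mem_univ _, Tr_AS h2 hm hcard s⟩
  -- fibers of ψ have exactly 2 elements
  have hfiber : ∀ s : F, Finset.univ.filter (fun x => ψ x = ψ s) = {s, s + 1} := by
    intro s
    ext x
    simp only [Finset.mem_filter, Finset.mem_univ, true_and, Finset.mem_insert,
      Finset.mem_singleton]
    constructor
    · intro hx
      have key : (x + s) * (x + s + 1) = 0 := by
        have hthis : x ^ 2 + x = s ^ 2 + s := hx
        linear_combination hthis + (x * s + s ^ 2 + s) * h2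
      rcases mul_eq_zero.mp key with h | h
      · left
        linear_combination h - s * h2
      · right
        linear_combination h - (s + 1) * h2
    · rintro (rfl | rfl)
      · rfl
      · show (s + 1) ^ 2 + (s + 1) = s ^ 2 + s
        linear_combination (s + 1) * h2
  have hcard2 : ∀ y ∈ img, (Finset.univ.filter (fun x => ψ x = y)).card = 2 := by
    intro y hy
    obtain ⟨s, _, rfl⟩ := Finset.mem_image.mp hy
    rw [hfiber s]
    rw [Finset.card_insert_of_notMem, Finset.card_singleton]
    simp only [Finset.mem_singleton]
    intro hc'
    exact one_ne_zero (by linear_combination -hc')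
  have hcount : Fintype.card F = 2 * img.card := by
    have := Finset.card_eq_sum_card_image ψ Finset.univ
    rw [← himg] at this
    rw [Finset.card_univ] at this
    rw [this, Finset.sum_congr rfl hcard2, Finset.sum_const, smul_eq_mul, Nat.mul_comm]
  -- roots bound
  set Pp : Polynomial F := ∑ j ∈ range m, Polynomial.X ^ 2 ^ j with hPp
  have hPne : Pp ≠ 0 := by
    intro hc'
    have : Pp.coeff 1 = 1 := by
      rw [hPp, Polynomial.finset_sum_coeff]
      rw [Finset.sum_eq_single 0]
      · simp
      · intro j hj hj0
        rw [Polynomial.coeff_X_pow]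
        have : 2 ^ j ≠ 1 := by
          have : 1 ≤ j := Nat.one_le_iff_ne_zero.mpr hj0
          have := Nat.pow_le_pow_right (show 1 ≤ 2 by norm_num) this
          omega
        simp [Ne.symm this]
      · intro h
        exact absurd (Finset.mem_range.mpr hm) h
    rw [hc'] at this
    simp at this
  have hdeg : Pp.natDegree ≤ 2 ^ (m - 1) := by
    apply Polynomial.natDegree_sum_le_of_forall_le
    intro j hj
    rw [Polynomial.natDegree_X_pow]
    exact Nat.pow_le_pow_right (by norm_num) (by
      have := Finset.mem_range.mp hj; omega)
  have heval : ∀ x : F, Pp.eval x = Tr m x := by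
    intro x
    rw [hPp, Polynomial.eval_finset_sum]
    apply Finset.sum_congr rfl
    intro j _
    rw [Polynomial.eval_pow, Polynomial.eval_X]
  have hroots : fset.card ≤ 2 ^ (m - 1) := by
    have hsub2 : fset ⊆ Pp.roots.toFinset := by
      intro x hx
      rw [Multiset.mem_toFinset, Polynomial.mem_roots hPne, Polynomial.IsRoot, heval x]
      exact (Finset.mem_filter.mp hx).2
    calc fset.card ≤ Pp.roots.toFinset.card := Finset.card_le_card hsub2
      _ ≤ Multiset.card Pp.roots := Multiset.toFinset_card_le _
      _ ≤ Pp.natDegree := Pp.card_roots'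
      _ ≤ 2 ^ (m - 1) := hdeg
  have himgcard : img.card = 2 ^ (m - 1) := by
    have h1 : 2 * img.card = 2 ^ m := by rw [← hcount, hcard]
    have h2' : (2:ℕ) ^ m = 2 * 2 ^ (m - 1) := by
      rw [← pow_succ']
      congr 1
      omega
    omega
  have hEq : img = fset := Finset.eq_of_subset_of_card_le hsub (by omega)
  have hcfset : c ∈ fset := Finset.mem_filter.mpr ⟨Finset.mem_univ _, hc⟩
  rw [← hEq] at hcfset
  obtain ⟨s, _, hs⟩ := Finset.mem_image.mp hcfset
  exact ⟨s, hs⟩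


lemma inv_eq_pow (hm : 0 < m) (hcard : Fintype.card F = 2 ^ m) {x : F} (hx : x ≠ 0) :
    x⁻¹ = x ^ (2 ^ m - 2) := by
  have h1 : x ^ (2 ^ m - 1) = 1 := by
    rw [← hcard]; exact FiniteField.pow_card_sub_one_eq_one x hx
  have h2 : x * x ^ (2 ^ m - 2) = 1 := by
    rw [← pow_succ']
    have : 2 ^ m - 2 + 1 = 2 ^ m - 1 := by
      have : 2 ≤ 2 ^ m := by
        calc (2:ℕ) = 2 ^ 1 := rfl
          _ ≤ 2 ^ m := Nat.pow_le_pow_right (by norm_num) hm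
      omega
    rw [this, h1]
  exact inv_eq_of_mul_eq_one_right h2

lemma pow_mod_q (hm : 0 < m) (hcard : Fintype.card F = 2 ^ m) {x : F} (hx : x ≠ 0) (k : ℕ) :
    x ^ (k % (2 ^ m - 1)) = x ^ k := by
  have h1 : x ^ (2 ^ m - 1) = 1 := by
    rw [← hcard]; exact FiniteField.pow_card_sub_one_eq_one x hx
  conv_rhs => rw [← Nat.div_add_mod k (2 ^ m - 1)]
  rw [pow_add, pow_mul, h1, one_pow, one_mul]

lemma not_dvd_exponent (hm2 : 2 ≤ m) {i : ℕ} (hi : i < m) :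
    ¬ (2 ^ m - 1 ∣ 2 ^ i + (2 ^ m - 2) * 3) := by
  intro hdvd
  set N := 2 ^ m - 1 with hN
  have hP : (4:ℕ) ≤ 2 ^ m := by
    calc (4:ℕ) = 2 ^ 2 := rfl
      _ ≤ 2 ^ m := Nat.pow_le_pow_right (by norm_num) hm2
  have hN3 : 3 ≤ N := by omega
  have key : ∀ r c : ℕ, 0 < r → r < N → 2 ^ i + (2 ^ m - 2) * 3 = r + N * c → False := by
    intro r c hr hrN he
    rw [he] at hdvd
    have h1 : N ∣ (r + N * c) - N * c := Nat.dvd_sub hdvd (dvd_mul_right N c)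
    rw [show r + N * c - N * c = r by omega] at h1
    exact absurd (Nat.le_of_dvd hr h1) (by omega)
  by_cases hi2 : 2 ≤ i
  · have hA : 4 ≤ 2 ^ i := by
      calc (4:ℕ) = 2 ^ 2 := rfl
        _ ≤ 2 ^ i := Nat.pow_le_pow_right (by norm_num) hi2
    have h2A : 2 ^ i * 2 ≤ 2 ^ m := by
      calc 2 ^ i * 2 = 2 ^ (i + 1) := by rw [pow_succ]
        _ ≤ 2 ^ m := Nat.pow_le_pow_right (by norm_num) (by omega)
    exact key (2 ^ i - 3) 3 (by omega) (by omega) (by omega)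
  · interval_cases i
    · exact key (N - 2) 2 (by omega) (by omega) (by simp; omega)
    · exact key (N - 1) 2 (by omega) (by omega) (by simp [pow_one]; omega)


lemma sum_units_pow [DecidableEq F] (hm2 : 2 ≤ m) (hcard : Fintype.card F = 2 ^ m)
    {i : ℕ} (hi : i < m) :
    ∑ u : Fˣ, ((u : F) ^ 2 ^ i * ((u : F)⁻¹) ^ 3) = 0 := by
  have hm : 0 < m := by omega
  have step : ∀ u : Fˣ, (u : F) ^ 2 ^ i * ((u : F)⁻¹) ^ 3
      = (u : F) ^ (2 ^ i + (2 ^ m - 2) * 3) := by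
    intro u
    rw [inv_eq_pow hm hcard (Units.ne_zero u), ← pow_mul, ← pow_add]
  rw [Finset.sum_congr rfl fun u _ => step u]
  have h := FiniteField.sum_pow_units F (2 ^ i + (2 ^ m - 2) * 3)
  rw [hcard] at h
  rw [h, if_neg (not_dvd_exponent hm2 hi)]

lemma cube_injective (hmodd : Odd m) (hcard : Fintype.card F = 2 ^ m) :
    Function.Injective (fun x : F => x ^ 3) := by
  have hm : 0 < m := hmodd.pos
  have h3 : ¬ (3 ∣ 2 ^ m - 1) := by
    intro hdvd
    have h1 : ((2 ^ m - 1 : ℕ) : ZMod 3) = 0 := (ZMod.natCast_eq_zero_iff _ _).mpr hdvd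
    rw [Nat.cast_sub Nat.one_le_two_pow] at h1
    push_cast at h1
    rw [show ((2 : ZMod 3)) = -1 by decide, Odd.neg_one_pow hmodd] at h1
    exact absurd h1 (by decide)
  intro x y hxy
  simp only at hxy
  by_cases hy : y = 0
  · subst hy
    rw [zero_pow (by norm_num)] at hxy
    exact pow_eq_zero_iff (by norm_num : (3:ℕ) ≠ 0) |>.mp hxy
  · have hx : x ≠ 0 := by
      intro hc
      rw [hc, zero_pow (by norm_num)] at hxy
      exact hy (pow_eq_zero_iff (by norm_num : (3:ℕ) ≠ 0) |>.mp hxy.symm)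
    set z := x * y⁻¹ with hz
    have hz0 : z ≠ 0 := mul_ne_zero hx (inv_ne_zero hy)
    have hz3 : z ^ 3 = 1 := by
      rw [hz, mul_pow, hxy, inv_pow, mul_inv_cancel₀ (pow_ne_zero 3 hy)]
    have hzq : z ^ (2 ^ m - 1) = 1 := by
      rw [← hcard]; exact FiniteField.pow_card_sub_one_eq_one z hz0
    have hord1 : orderOf z ∣ 3 := orderOf_dvd_of_pow_eq_one hz3
    have hord2 : orderOf z ∣ 2 ^ m - 1 := orderOf_dvd_of_pow_eq_one hzq
    have hordgcd : orderOf z ∣ Nat.gcd 3 (2 ^ m - 1) := Nat.dvd_gcd hord1 hord2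
    have hcop : Nat.gcd 3 (2 ^ m - 1) = 1 :=
      (Nat.Prime.coprime_iff_not_dvd Nat.prime_three).mpr h3
    rw [hcop, Nat.dvd_one] at hordgcd
    have hz1 : z = 1 := orderOf_eq_one_iff.mp hordgcd
    rw [hz, mul_inv_eq_one₀ hy] at hz1
    exact hz1


lemma E_inj (hm2 : 2 ≤ m) {i j i' j' : ℕ} (hi : i < m) (hj : j < m) (hi' : i' < m)
    (hj' : j' < m) (h : E m i j = E m i' j') : rot m j (B m i) = rot m j' (B m i') := by
  rw [E_eq_sum hm2 hi hj, E_eq_sum hm2 hi' hj'] at h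
  exact two_pow_sum_inj m _ _ (rot_subset_range (by omega) _ _)
    (rot_subset_range (by omega) _ _) h

lemma E_pair (hm2 : 2 ≤ m) : E m 0 0 = E m 1 1 := by
  rw [E_eq_sum hm2 (by omega) (by omega), E_eq_sum hm2 (by omega) (by omega)]
  congr 1
  have h := pair_eq hm2 0
  rw [show (0 + 1) % m = 1 by rw [Nat.mod_eq_of_lt (by omega)]] at h
  exact h.symm

end Stmt19Aux

open Finset Polynomial Stmt19Aux in
/-- For a nonzero linearized polynomial L(x) = Σ aᵢ x^{2ⁱ} over 𝔽_{2^m}, the map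
x ↦ x³ + L(x) permutes 𝔽_{2^m} iff m is odd and L(x) = θ²x + θx² for some θ ≠ 0. -/
theorem stmt_19 {F : Type*} [Field F] [Fintype F] (m : ℕ) (hm : 0 < m)
    (hcard : Fintype.card F = 2 ^ m) (a : Fin m → F) (ha : a ≠ 0) :
    Function.Bijective (fun x : F => x ^ 3 + ∑ i : Fin m, a i * x ^ 2 ^ (i : ℕ)) ↔
      (Odd m ∧ ∃ θ : F, θ ≠ 0 ∧
        ∀ x : F, (∑ i : Fin m, a i * x ^ 2 ^ (i : ℕ)) = θ ^ 2 * x + θ * x ^ 2) := by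
  classical
  have h2 : (2:F) = 0 := two_zero hm hcard
  have h1card : Nontrivial F := inferInstance
  by_cases hm1 : m = 1
  · subst hm1
    -- both sides are false
    have hsq : ∀ x : F, x ^ 2 = x := by
      intro x
      have := pow_card_self hcard x
      rwa [pow_one] at this
    have ha0 : a 0 ≠ 0 := by
      intro hc
      apply ha
      funext i
      have : i = 0 := Subsingleton.elim i 0
      rw [this, hc]; rfl
    have hval : ∀ x : F, x = 0 ∨ x = 1 := by
      intro x
      have h := hsq x
      have : x * (x - 1) = 0 := by linear_combination h
      rcases mul_eq_zero.mp this with h | h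
      · exact Or.inl h
      · exact Or.inr (by linear_combination h)
    have ha01 : a 0 = 1 := (hval (a 0)).resolve_left ha0
    constructor
    · intro hbij
      exfalso
      have hf0 : (0:F) ^ 3 + ∑ i : Fin 1, a i * (0:F) ^ 2 ^ (i:ℕ) = 0 := by
        simp [zero_pow]
      have hf1 : (1:F) ^ 3 + ∑ i : Fin 1, a i * (1:F) ^ 2 ^ (i:ℕ) = 0 := by
        rw [Fin.sum_univ_one, ha01]
        simp only [one_pow, mul_one]
        linear_combination h2
      have := hbij.1 (a₁ := (0:F)) (a₂ := (1:F)) (by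
        show (0:F) ^ 3 + ∑ i : Fin 1, a i * (0:F) ^ 2 ^ (i:ℕ)
          = (1:F) ^ 3 + ∑ i : Fin 1, a i * (1:F) ^ 2 ^ (i:ℕ)
        rw [hf0, hf1])
      exact one_ne_zero this.symm
    · rintro ⟨-, θ, hθ, hLθ⟩
      exfalso
      have hθ1 : θ = 1 := (hval θ).resolve_left hθ
      have := hLθ 1
      rw [Fin.sum_univ_one, ha01, hθ1] at this
      simp only [one_pow, mul_one, pow_one] at this
      exact one_ne_zero (by linear_combination -this)
  have hm2 : 2 ≤ m := by omega
  constructor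
  · intro hbij
    -- additivity of the linearized part
    have hLadd : ∀ x y : F, (∑ i : Fin m, a i * (x + y) ^ 2 ^ (i:ℕ))
        = (∑ i : Fin m, a i * x ^ 2 ^ (i:ℕ)) + ∑ i : Fin m, a i * y ^ 2 ^ (i:ℕ) := by
      intro x y
      rw [← Finset.sum_add_distrib]
      refine Finset.sum_congr rfl fun i _ => ?_
      rw [frob_pow_add h2, mul_add]
    have hdelta : ∀ x u : F, (x + u) ^ 3 + (∑ i : Fin m, a i * (x + u) ^ 2 ^ (i:ℕ))
        = (x ^ 3 + ∑ i : Fin m, a i * x ^ 2 ^ (i:ℕ))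
          + (u * x ^ 2 + u ^ 2 * x + (u ^ 3 + ∑ i : Fin m, a i * u ^ 2 ^ (i:ℕ))) := by
      intro x u
      linear_combination hLadd x u + (x ^ 2 * u + x * u ^ 2) * h2
    -- no Artin-Schreier solution
    have hnoAS : ∀ u : F, u ≠ 0 → ∀ s : F,
        s ^ 2 + s ≠ 1 + (∑ i : Fin m, a i * u ^ 2 ^ (i:ℕ)) * (u⁻¹) ^ 3 := by
      intro u hu s hs
      set Lu := ∑ i : Fin m, a i * u ^ 2 ^ (i:ℕ) with hLu
      have hinv : u * u⁻¹ = 1 := mul_inv_cancel₀ hu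
      have hs' : u ^ 3 * (s ^ 2 + s) = u ^ 3 + Lu := by
        rw [hs, mul_add, mul_one,
          show u ^ 3 * (Lu * (u⁻¹) ^ 3) = Lu * ((u * u⁻¹) ^ 3) by ring, hinv, one_pow, mul_one]
      have hkey : u * (u * s) ^ 2 + u ^ 2 * (u * s) + (u ^ 3 + Lu) = 0 := by
        linear_combination hs' + (u ^ 3 + Lu) * h2
      have heq := hdelta (u * s) u
      rw [hkey, add_zero] at heq
      have hfeq := hbij.1 (a₁ := u * s + u) (a₂ := u * s) (by
        show (u * s + u) ^ 3 + (∑ i : Fin m, a i * (u * s + u) ^ 2 ^ (i:ℕ))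
          = (u * s) ^ 3 + ∑ i : Fin m, a i * (u * s) ^ 2 ^ (i:ℕ)
        exact heq)
      exact hu (by linear_combination hfeq)
    -- trace condition
    have hcond : ∀ u : F, u ≠ 0 →
        Tr m (1 + (∑ i : Fin m, a i * u ^ 2 ^ (i:ℕ)) * (u⁻¹) ^ 3) = 1 := by
      intro u hu
      rcases Tr_zero_or_one h2 hm hcard
          (1 + (∑ i : Fin m, a i * u ^ 2 ^ (i:ℕ)) * (u⁻¹) ^ 3) with h0 | h1
      · exfalso
        obtain ⟨s, hs⟩ := AS_of_Tr_zero h2 hm hcard h0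
        exact hnoAS u hu s hs
      · exact h1
    -- the constant sum over units
    have hcast1 : ((2 ^ m - 1 : ℕ) : F) = 1 := by
      rw [Nat.cast_sub Nat.one_le_two_pow]
      push_cast
      rw [show ((2:F)) ^ m = 0 by rw [h2, zero_pow hm.ne']]
      linear_combination -h2
    have hone : ∑ _u : Fˣ, (1:F) = 1 := by
      rw [Finset.sum_const, Finset.card_univ, Fintype.card_units, hcard, nsmul_eq_mul, mul_one]
      exact hcast1
    -- Tr 1 = 1
    have hTr1 : Tr m (1:F) = 1 := by
      have hsum1 : ∑ u : Fˣ,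
          Tr m (1 + (∑ i : Fin m, a i * (u:F) ^ 2 ^ (i:ℕ)) * ((u:F)⁻¹) ^ 3) = 1 := by
        have hterm : ∀ u : Fˣ,
            Tr m (1 + (∑ i : Fin m, a i * (u:F) ^ 2 ^ (i:ℕ)) * ((u:F)⁻¹) ^ 3) = 1 :=
          fun u => hcond ((u:F)) (Units.ne_zero u)
        rw [Finset.sum_congr rfl fun u _ => hterm u]
        rw [Finset.sum_const, Finset.card_univ, Fintype.card_units, hcard, nsmul_eq_mul, mul_one]
        exact hcast1
      have hswap : ∑ u : Fˣ,
          Tr m (1 + (∑ i : Fin m, a i * (u:F) ^ 2 ^ (i:ℕ)) * ((u:F)⁻¹) ^ 3)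
          = Tr m (∑ u : Fˣ, (1 + (∑ i : Fin m, a i * (u:F) ^ 2 ^ (i:ℕ)) * ((u:F)⁻¹) ^ 3)) :=
        (Tr_sum h2 _ _).symm
      have hinner : ∑ u : Fˣ,
          ((1:F) + (∑ i : Fin m, a i * (u:F) ^ 2 ^ (i:ℕ)) * ((u:F)⁻¹) ^ 3) = 1 := by
        rw [Finset.sum_add_distrib, hone]
        have hB : ∑ u : Fˣ,
            (∑ i : Fin m, a i * (u:F) ^ 2 ^ (i:ℕ)) * ((u:F)⁻¹) ^ 3 = 0 := by
          have hstep : ∀ u : Fˣ, (∑ i : Fin m, a i * (u:F) ^ 2 ^ (i:ℕ)) * ((u:F)⁻¹) ^ 3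
              = ∑ i : Fin m, a i * ((u:F) ^ 2 ^ (i:ℕ) * ((u:F)⁻¹) ^ 3) := by
            intro u
            rw [Finset.sum_mul]
            exact Finset.sum_congr rfl fun i _ => by ring
          rw [Finset.sum_congr rfl fun u _ => hstep u, Finset.sum_comm]
          apply Finset.sum_eq_zero
          intro i _
          rw [← Finset.mul_sum, sum_units_pow hm2 hcard i.isLt, mul_zero]
        rw [hB, add_zero]
      rw [hswap, hinner] at hsum1
      exact hsum1
    -- m is odd
    have hmodd : Odd m := by
      rcases Nat.even_or_odd m with he | ho
      · exfalso
        obtain ⟨k, hk⟩ := he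
        have hTm : Tr m (1:F) = (m:F) := Tr_one
        rw [hTm, hk] at hTr1
        push_cast at hTr1
        rw [show ((k:F) + k) = 2 * k by ring, h2, zero_mul] at hTr1
        exact one_ne_zero hTr1.symm
      · exact ho
    have hm3 : 3 ≤ m := by
      obtain ⟨w, hw⟩ := hmodd
      omega
    -- refined condition
    have hcond' : ∀ u : F, u ≠ 0 →
        Tr m ((∑ i : Fin m, a i * u ^ 2 ^ (i:ℕ)) * (u⁻¹) ^ 3) = 0 := by
      intro u hu
      have h := hcond u hu
      rw [Tr_add h2, hTr1] at h
      linear_combination h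
    -- the polynomial
    set Q : Polynomial F := ∑ p : Fin m × Fin m,
      Polynomial.C (a p.1 ^ 2 ^ ((p.2:ℕ))) * Polynomial.X ^ (E m (p.1:ℕ) (p.2:ℕ)) with hQdef
    have hNpos : 0 < 2 ^ m - 1 := by
      have : (4:ℕ) ≤ 2 ^ m := by
        calc (4:ℕ) = 2 ^ 2 := rfl
          _ ≤ 2 ^ m := Nat.pow_le_pow_right (by norm_num) hm2
      omega
    have hQeval : ∀ x : F, x ≠ 0 → Q.eval x = 0 := by
      intro x hx
      have hEpow : ∀ i j : Fin m,
          x ^ (E m (i:ℕ) (j:ℕ)) = (x ^ 2 ^ (i:ℕ)) ^ 2 ^ (j:ℕ) * ((x⁻¹) ^ 3) ^ 2 ^ (j:ℕ) := by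
        intro i j
        have h1 : x ^ (E m (i:ℕ) (j:ℕ))
            = x ^ (2 ^ ((i:ℕ) + (j:ℕ)) + (2 ^ m - 2) * (3 * 2 ^ (j:ℕ))) :=
          pow_mod_q hm hcard hx _
        rw [h1, pow_add]
        congr 1
        · rw [pow_add, pow_mul]
        · rw [show (2 ^ m - 2) * (3 * 2 ^ (j:ℕ)) = ((2 ^ m - 2) * 3) * 2 ^ (j:ℕ) by ring,
            pow_mul, pow_mul, inv_eq_pow hm hcard hx]
      calc Q.eval x = ∑ p : Fin m × Fin m,
            a p.1 ^ 2 ^ ((p.2:ℕ)) * x ^ (E m (p.1:ℕ) (p.2:ℕ)) := by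
            rw [hQdef, Polynomial.eval_finset_sum]
            exact Finset.sum_congr rfl fun p _ => by
              rw [Polynomial.eval_mul, Polynomial.eval_C, Polynomial.eval_pow,
                Polynomial.eval_X]
        _ = ∑ p : Fin m × Fin m,
              (a p.1 * (x ^ 2 ^ ((p.1:ℕ)) * (x⁻¹) ^ 3)) ^ 2 ^ ((p.2:ℕ)) := by
            refine Finset.sum_congr rfl fun p _ => ?_
            rw [hEpow p.1 p.2, mul_pow, mul_pow]
        _ = ∑ j : Fin m, ∑ i : Fin m,
              (a i * (x ^ 2 ^ (i:ℕ) * (x⁻¹) ^ 3)) ^ 2 ^ (j:ℕ) := by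
            rw [Fintype.sum_prod_type]
            exact Finset.sum_comm
        _ = ∑ j : Fin m,
              ((∑ i : Fin m, a i * x ^ 2 ^ (i:ℕ)) * (x⁻¹) ^ 3) ^ 2 ^ (j:ℕ) := by
            refine Finset.sum_congr rfl fun j _ => ?_
            rw [Finset.sum_mul, frob_pow_sum h2]
            exact Finset.sum_congr rfl fun i _ => by rw [mul_assoc]
        _ = Tr m ((∑ i : Fin m, a i * x ^ 2 ^ (i:ℕ)) * (x⁻¹) ^ 3) := by
            unfold Tr
            exact Fin.sum_univ_eq_sum_range
              (fun j => ((∑ i : Fin m, a i * x ^ 2 ^ (i:ℕ)) * (x⁻¹) ^ 3) ^ 2 ^ j) m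
        _ = 0 := hcond' x hx
    have hQdeg : Q.natDegree ≤ 2 ^ m - 2 := by
      rw [hQdef]
      apply Polynomial.natDegree_sum_le_of_forall_le
      intro p _
      calc (Polynomial.C (a p.1 ^ 2 ^ ((p.2:ℕ))) *
            Polynomial.X ^ (E m (p.1:ℕ) (p.2:ℕ))).natDegree
          ≤ (Polynomial.X ^ (E m (p.1:ℕ) (p.2:ℕ)) : Polynomial F).natDegree :=
            Polynomial.natDegree_C_mul_le _ _
        _ = E m (p.1:ℕ) (p.2:ℕ) := Polynomial.natDegree_X_pow _
        _ ≤ 2 ^ m - 2 := by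
            have := Nat.mod_lt (2 ^ ((p.1:ℕ) + (p.2:ℕ)) + (2 ^ m - 2) * (3 * 2 ^ ((p.2:ℕ))))
              hNpos
            unfold E
            omega
    have hQ0 : Q = 0 := by
      by_contra hQne
      have hroots : (Finset.univ.erase (0:F)) ⊆ Q.roots.toFinset := by
        intro x hx
        rw [Multiset.mem_toFinset, Polynomial.mem_roots hQne]
        exact hQeval x (Finset.mem_erase.mp hx).1
      have hc1 : (Finset.univ.erase (0:F)).card = 2 ^ m - 1 := by
        rw [Finset.card_erase_of_mem (Finset.mem_univ _), Finset.card_univ, hcard]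
      have hc2 : Q.roots.toFinset.card ≤ 2 ^ m - 2 :=
        le_trans (Multiset.toFinset_card_le _) (le_trans Q.card_roots' hQdeg)
      have hc3 := Finset.card_le_card hroots
      omega
    -- coefficient extraction
    have hcoeff : ∀ i0 j0 : Fin m,
        ∑ p ∈ Finset.univ.filter
          (fun p : Fin m × Fin m => E m (i0:ℕ) (j0:ℕ) = E m (p.1:ℕ) (p.2:ℕ)),
          a p.1 ^ 2 ^ ((p.2:ℕ)) = 0 := by
      intro i0 j0
      have hc : Q.coeff (E m (i0:ℕ) (j0:ℕ)) = 0 := by rw [hQ0, Polynomial.coeff_zero]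
      rw [hQdef, Polynomial.finset_sum_coeff] at hc
      rw [Finset.sum_congr rfl (fun p _ => by
        rw [Polynomial.coeff_C_mul, Polynomial.coeff_X_pow, mul_ite, mul_one, mul_zero])] at hc
      rwa [Finset.sum_ite, Finset.sum_const, smul_zero, add_zero] at hc
    -- single fibers for i0 ≥ 2
    have hzero : ∀ i0 : Fin m, 2 ≤ (i0:ℕ) → a i0 = 0 := by
      intro i0 hi2
      have hj0 : (0:ℕ) < m := by omega
      have hfib : Finset.univ.filter
          (fun p : Fin m × Fin m => E m (i0:ℕ) ((⟨0, hj0⟩ : Fin m):ℕ) = E m (p.1:ℕ) (p.2:ℕ))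
          = {(i0, ⟨0, hj0⟩)} := by
        ext p
        simp only [Finset.mem_filter, Finset.mem_univ, true_and, Finset.mem_singleton]
        constructor
        · intro hE
          have hrot := E_inj hm2 i0.isLt (by simpa using hj0) p.1.isLt p.2.isLt hE
          rcases classify hm3 hmodd i0.isLt (by simpa using hj0) p.1.isLt p.2.isLt hrot with
            ⟨hii, hjj⟩ | ⟨hi0, -, -⟩ | ⟨hi0, -, -⟩
          · have : p.1 = i0 := Fin.ext hii.symm
            have h2' : p.2 = (⟨0, hj0⟩ : Fin m) := Fin.ext hjj.symm
            rw [Prod.ext_iff]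
            exact ⟨this, h2'⟩
          · omega
          · omega
        · rintro rfl
          rfl
      have h := hcoeff i0 ⟨0, hj0⟩
      rw [hfib, Finset.sum_singleton] at h
      exact pow_eq_zero_iff (Nat.two_pow_pos _).ne' |>.mp h
    -- the pair fiber for i0 = 0, j0 = 0
    have h0m : (0:ℕ) < m := by omega
    have h1m : (1:ℕ) < m := by omega
    have hfibpair : Finset.univ.filter
        (fun p : Fin m × Fin m =>
          E m ((⟨0, h0m⟩ : Fin m):ℕ) ((⟨0, h0m⟩ : Fin m):ℕ) = E m (p.1:ℕ) (p.2:ℕ))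
        = {((⟨0, h0m⟩ : Fin m), (⟨0, h0m⟩ : Fin m)), ((⟨1, h1m⟩ : Fin m), (⟨1, h1m⟩ : Fin m))} := by
      ext p
      simp only [Finset.mem_filter, Finset.mem_univ, true_and, Finset.mem_insert,
        Finset.mem_singleton]
      constructor
      · intro hE
        have hrot := E_inj hm2 (by simpa using h0m) (by simpa using h0m) p.1.isLt p.2.isLt hE
        rcases classify hm3 hmodd (by simpa using h0m) (by simpa using h0m)
            p.1.isLt p.2.isLt hrot with
          ⟨hii, hjj⟩ | ⟨-, hi1, hj1⟩ | ⟨h01, -, -⟩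
        · left
          rw [Prod.ext_iff]
          exact ⟨Fin.ext hii.symm, Fin.ext hjj.symm⟩
        · right
          rw [Prod.ext_iff]
          refine ⟨Fin.ext hi1, Fin.ext ?_⟩
          rw [hj1]
          simp [Nat.mod_eq_of_lt h1m]
        · omega
      · rintro (rfl | rfl)
        · rfl
        · show E m 0 0 = E m 1 1
          exact E_pair hm2
    have hab : a ⟨0, h0m⟩ = a ⟨1, h1m⟩ ^ 2 := by
      have h := hcoeff ⟨0, h0m⟩ ⟨0, h0m⟩
      rw [hfibpair, Finset.sum_pair (by
        intro hc
        rw [Prod.ext_iff] at hc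
        have := hc.1
        rw [Fin.ext_iff] at this
        simp at this)] at h
      simp only [pow_zero, pow_one] at h
      linear_combination h - a ⟨1, h1m⟩ ^ 2 * h2
    -- assemble the answer
    refine ⟨hmodd, a ⟨1, h1m⟩, ?_, ?_⟩
    · intro hθ0
      apply ha
      funext i
      by_cases hi2 : 2 ≤ (i:ℕ)
      · exact hzero i hi2
      · have : (i:ℕ) = 0 ∨ (i:ℕ) = 1 := by omega
        rcases this with h | h
        · have : i = ⟨0, h0m⟩ := Fin.ext h
          rw [this, hab, hθ0]
          simp
        · have : i = ⟨1, h1m⟩ := Fin.ext h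
          rw [this, hθ0]
          rfl
    · intro x
      have hsplit : ∑ i : Fin m, a i * x ^ 2 ^ (i:ℕ)
          = ∑ i ∈ ({⟨0, h0m⟩, ⟨1, h1m⟩} : Finset (Fin m)), a i * x ^ 2 ^ (i:ℕ) := by
        refine (Finset.sum_subset (Finset.subset_univ _) fun i _ hnot => ?_).symm
        have hi2 : 2 ≤ (i:ℕ) := by
          simp only [Finset.mem_insert, Finset.mem_singleton] at hnot
          push_neg at hnot
          obtain ⟨hn0, hn1⟩ := hnot
          have hv0 : (i:ℕ) ≠ 0 := fun hc => hn0 (Fin.ext hc)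
          have hv1 : (i:ℕ) ≠ 1 := fun hc => hn1 (Fin.ext hc)
          omega
        rw [hzero i hi2, zero_mul]
      rw [hsplit, Finset.sum_insert (by simp [Fin.ext_iff]), Finset.sum_singleton]
      simp only [pow_zero, pow_one]
      rw [hab]
      try ring
  · rintro ⟨hmodd, θ, hθ, hLθ⟩
    have hfun : (fun x : F => x ^ 3 + ∑ i : Fin m, a i * x ^ 2 ^ (i : ℕ))
        = (fun y : F => y + θ ^ 3) ∘ (fun y : F => y ^ 3) ∘ (fun x : F => x + θ) := by
      funext x
      simp only [Function.comp_apply]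
      rw [hLθ x]
      linear_combination -(θ * x ^ 2 + θ ^ 2 * x + θ ^ 3) * h2
    rw [hfun]
    have hcube : Function.Bijective (fun y : F => y ^ 3) :=
      Finite.injective_iff_bijective.mp (cube_injective hmodd hcard)
    have hadd1 : Function.Bijective (fun y : F => y + θ ^ 3) := (Equiv.addRight (θ^3)).bijective
    have hadd2 : Function.Bijective (fun x : F => x + θ) := (Equiv.addRight θ).bijective
    exact hadd1.comp (hcube.comp hadd2)
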